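/- arXiv:1805.03336 — 2 statements merged into one kernel-verified Lean document; each statement's English description precedes it below -/
import Mathlib

section
/- Let d ≥ 1 and let μ be a Borel probability measure on ℝ^d with marginal cdfs F_1, …, F_d (where F_i(y) = μ({x ∈ ℝ^d : x_i ≤ y})). Then there exists a Borel probability measure ν on ℝ^d, supported on [0,1]^d, each of whose one-dimensional marginals is the uniform distribution on [0,1], such that for every y = (y_1, …, y_d) ∈ ℝ^d one has μ(∏_{i=1}^d (-∞, y_i]) = ν(∏_{i=1}^d [0, F_i(y_i)]). (Existence part of Sklar's theorem: every multivariate distribution F can be written F(y) = C(F_1(y_1), …, F_d(y_d)) for a copula C.) -/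
open MeasureTheory Set Filter Topology ProbabilityTheory
open scoped ENNReal


noncomputable def gl (ρ : Measure ℝ) : ℝ → ℝ := Function.leftLim (cdf ρ)
noncomputable def tr (ρ : Measure ℝ) : ℝ × ℝ → ℝ :=
  fun p => gl ρ p.1 + p.2 * (cdf ρ p.1 - gl ρ p.1)
noncomputable def vol01 : Measure ℝ := volume.restrict (Icc 0 1)

lemma vol01_apply (S : Set ℝ) : vol01 S = volume (S ∩ Icc 0 1) :=
  Measure.restrict_apply' measurableSet_Icc

instance : IsProbabilityMeasure vol01 :=
  ⟨by rw [vol01, Measure.restrict_apply_univ, Real.volume_Icc]; norm_num⟩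

lemma vol01_one {A : Set ℝ} (h : Icc 0 1 ⊆ A) : vol01 A = 1 := by
  rw [vol01_apply, inter_eq_self_of_subset_right h, Real.volume_Icc]; norm_num

lemma vol01_zero {A : Set ℝ} (h : A ∩ Icc 0 1 ⊆ {0}) : vol01 A = 0 := by
  rw [vol01_apply]
  exact measure_mono_null h Real.volume_singleton

lemma gl_mono (ρ : Measure ℝ) : Monotone (gl ρ) := (cdf ρ).mono.leftLim
lemma gl_le (ρ : Measure ℝ) (x : ℝ) : gl ρ x ≤ cdf ρ x :=
  Monotone.leftLim_le (cdf ρ).mono le_rfl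
lemma gl_nonneg (ρ : Measure ℝ) (x : ℝ) : 0 ≤ gl ρ x :=
  le_trans (cdf_nonneg ρ (x-1)) (Monotone.le_leftLim (cdf ρ).mono (by linarith))
lemma cdf_le_gl (ρ : Measure ℝ) {x y : ℝ} (h : x < y) : cdf ρ x ≤ gl ρ y :=
  Monotone.le_leftLim (cdf ρ).mono h

lemma measurable_tr (ρ : Measure ℝ) : Measurable (tr ρ) := by
  unfold tr
  exact (((gl_mono ρ).measurable).comp measurable_fst).add
    (measurable_snd.mul ((((cdf ρ).mono.measurable).comp measurable_fst).sub
      (((gl_mono ρ).measurable).comp measurable_fst)))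

lemma measure_Iic' (ρ : Measure ℝ) [IsProbabilityMeasure ρ] (x : ℝ) :
    ρ (Iic x) = ENNReal.ofReal (cdf ρ x) := (ofReal_cdf ρ x).symm

lemma measure_singleton' (ρ : Measure ℝ) [IsProbabilityMeasure ρ] (x : ℝ) :
    ρ {x} = ENNReal.ofReal (cdf ρ x - gl ρ x) := by
  conv_lhs => rw [← measure_cdf ρ]
  exact (cdf ρ).measure_singleton x

lemma measure_Ioc' (ρ : Measure ℝ) [IsProbabilityMeasure ρ] (a b : ℝ) :
    ρ (Ioc a b) = ENNReal.ofReal (cdf ρ b - cdf ρ a) := by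
  conv_lhs => rw [← measure_cdf ρ]
  exact (cdf ρ).measure_Ioc a b

lemma measure_Iio' (ρ : Measure ℝ) [IsProbabilityMeasure ρ] (x : ℝ) :
    ρ (Iio x) = ENNReal.ofReal (gl ρ x) := by
  have h1 : ρ (Iio x) + ρ {x} = ρ (Iic x) := by
    rw [← measure_union (by simp) (measurableSet_singleton x)]
    congr 1
    ext t; simp [le_iff_lt_or_eq]
  have h2 := measure_singleton' ρ x
  have h3 := measure_Iic' ρ x
  have hgf := gl_le ρ x
  rw [h2, h3] at h1
  have : ENNReal.ofReal (cdf ρ x) = ENNReal.ofReal (gl ρ x) + ENNReal.ofReal (cdf ρ x - gl ρ x) := by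
    rw [← ENNReal.ofReal_add (gl_nonneg ρ x) (by linarith)]
    ring_nf
  rw [this] at h1
  exact (ENNReal.add_left_inj ENNReal.ofReal_ne_top).mp h1

lemma key_null (ρ : Measure ℝ) (S : Set ℝ) (h : ∀ x ∈ S, ρ (S ∩ Iic x) = 0) :
    ρ S = 0 := by
  set M : Set ℝ := {w ∈ S | ∀ x ∈ S, x ≤ w} with hM
  have hMnull : ρ M = 0 := by
    rcases eq_empty_or_nonempty M with h0 | ⟨w, hw⟩
    · simp [h0]
    · refine measure_mono_null ?_ (h w hw.1)
      intro z hz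
      exact ⟨hz.1, hw.2 z hz.1⟩
  have hdiff : ρ (S \ M) = 0 := by
    set C : ℚ → Set ℝ := fun q => ⋃ (_ : ∃ x ∈ S, (q:ℝ) < x), S ∩ Iio (q:ℝ) with hC
    have hCnull : ∀ q : ℚ, ρ (C q) = 0 := by
      intro q
      rw [hC]
      rcases Classical.em (∃ x ∈ S, (q:ℝ) < x) with ⟨x, hx, hqx⟩ | hne
      · refine measure_mono_null ?_ (h x hx)
        intro z hz
        simp only [mem_iUnion] at hz
        obtain ⟨_, hz⟩ := hz
        exact ⟨hz.1, le_of_lt (lt_of_lt_of_le hz.2 hqx.le)⟩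
      · simp [hne]
    refine measure_mono_null ?_ (measure_iUnion_null hCnull)
    intro w hw
    have : ∃ x ∈ S, w < x := by
      by_contra hcon
      push_neg at hcon
      exact hw.2 ⟨hw.1, hcon⟩
    obtain ⟨x, hx, hwx⟩ := this
    obtain ⟨q, hq1, hq2⟩ := exists_rat_btwn hwx
    refine mem_iUnion.mpr ⟨q, ?_⟩
    rw [hC]
    exact mem_iUnion.mpr ⟨⟨x, hx, hq2⟩, ⟨hw.1, hq1⟩⟩
  refine le_antisymm ?_ zero_le
  calc ρ S ≤ ρ ((S \ M) ∪ M) := measure_mono (by intro z hz; by_cases h : z ∈ M <;> simp [h, hz])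
  _ ≤ ρ (S \ M) + ρ M := measure_union_le _ _
  _ = 0 := by rw [hMnull, hdiff, add_zero]

/-- The distributional transform of `ρ` pushes `ρ ⊗ Unif[0,1]` to `Unif[0,1]`. -/
lemma map_tr (ρ : Measure ℝ) [IsProbabilityMeasure ρ] :
    (ρ.prod vol01).map (tr ρ) = vol01 := by
  have hmeas := measurable_tr ρ
  haveI : IsProbabilityMeasure ((ρ.prod vol01).map (tr ρ)) :=
    Measure.isProbabilityMeasure_map hmeas.aemeasurable
  refine Measure.ext_of_Iic _ _ (fun u => ?_)
  rw [Measure.map_apply hmeas measurableSet_Iic,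
    Measure.prod_apply (hmeas measurableSet_Iic)]
  have hfiber : ∀ x : ℝ, Prod.mk x ⁻¹' (tr ρ ⁻¹' Iic u) =
      {v : ℝ | gl ρ x + v * (cdf ρ x - gl ρ x) ≤ u} := fun x => rfl
  rcases lt_or_ge u 0 with hu | hu0
  · -- u < 0 : both sides zero
    have hR : vol01 (Iic u) = 0 := by
      rw [vol01_apply]
      refine measure_mono_null ?_ (measure_empty (μ := volume))
      rintro z ⟨h1, h2, -⟩
      simp only [mem_Iic] at h1
      exfalso; linarith
    rw [hR]
    have : ∀ x : ℝ, vol01 (Prod.mk x ⁻¹' (tr ρ ⁻¹' Iic u)) = 0 := by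
      intro x
      rw [hfiber]
      refine vol01_zero (fun v hv => ?_)
      exfalso
      obtain ⟨hle, hv0, hv1⟩ := hv
      have h1 := gl_nonneg ρ x
      have h2 : 0 ≤ v * (cdf ρ x - gl ρ x) :=
        mul_nonneg hv0 (by linarith [gl_le ρ x])
      simp only [mem_setOf_eq] at hle
      linarith
    rw [lintegral_congr this, lintegral_zero]
  rcases le_or_gt 1 u with hu1 | hu1
  · -- u ≥ 1 : both sides one
    have hR : vol01 (Iic u) = 1 := vol01_one (fun z hz => le_trans hz.2 hu1)
    rw [hR]
    have : ∀ x : ℝ, vol01 (Prod.mk x ⁻¹' (tr ρ ⁻¹' Iic u)) = 1 := by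
      intro x
      rw [hfiber]
      refine vol01_one (fun v hv => ?_)
      obtain ⟨hv0, hv1⟩ := hv
      have h1 := gl_le ρ x
      have h2 := cdf_le_one ρ x
      have h3 : v * (cdf ρ x - gl ρ x) ≤ cdf ρ x - gl ρ x := by nlinarith
      show gl ρ x + v * (cdf ρ x - gl ρ x) ≤ u
      linarith
    rw [lintegral_congr this, lintegral_one, measure_univ]
  rcases hu0.eq_or_lt with hu0' | hupos
  · -- u = 0
    subst hu0'
    have hR : vol01 (Iic (0:ℝ)) = 0 := by
      refine vol01_zero (fun z hz => ?_)
      obtain ⟨h1, h2, -⟩ := hz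
      simp only [mem_Iic] at h1
      exact le_antisymm h1 h2
    rw [hR]
    have hZmeas : MeasurableSet {x : ℝ | cdf ρ x ≤ 0} :=
      (cdf ρ).mono.measurable measurableSet_Iic
    have hZ : ρ {x : ℝ | cdf ρ x ≤ 0} = 0 := by
      refine key_null ρ _ (fun x hx => measure_mono_null inter_subset_right ?_)
      rw [measure_Iic']
      exact ENNReal.ofReal_eq_zero.mpr hx
    rw [← lintegral_add_compl _ hZmeas]
    have hZint : ∫⁻ x in {x : ℝ | cdf ρ x ≤ 0},
        vol01 (Prod.mk x ⁻¹' (tr ρ ⁻¹' Iic 0)) ∂ρ = 0 :=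
      setLIntegral_measure_zero _ _ hZ
    have hZcint : ∫⁻ x in {x : ℝ | cdf ρ x ≤ 0}ᶜ,
        vol01 (Prod.mk x ⁻¹' (tr ρ ⁻¹' Iic 0)) ∂ρ = 0 := by
      rw [setLIntegral_congr_fun hZmeas.compl
        (fun x hx => ?_), lintegral_zero]
      rw [hfiber]
      have hfx : 0 < cdf ρ x := lt_of_not_ge hx
      refine vol01_zero (fun v hv => ?_)
      obtain ⟨hle, hv0, hv1⟩ := hv
      simp only [mem_setOf_eq] at hle
      have h1 := gl_nonneg ρ x
      have h2 : 0 ≤ v * (cdf ρ x - gl ρ x) :=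
        mul_nonneg hv0 (by linarith [gl_le ρ x])
      have hg0 : gl ρ x = 0 := le_antisymm (by linarith) h1
      have hprod : v * (cdf ρ x - gl ρ x) = 0 := le_antisymm (by linarith) h2
      have hv' : v = 0 := by
        rcases mul_eq_zero.mp hprod with h | h
        · exact h
        · exfalso; rw [hg0] at h; linarith
      simp [hv']
    rw [hZint, hZcint, add_zero]
  · -- main case : 0 < u < 1
    have hbdd : BddBelow {x : ℝ | u ≤ cdf ρ x} := by
      obtain ⟨M, hM⟩ := eventually_atBot.mp
        ((tendsto_cdf_atBot ρ).eventually (eventually_lt_nhds hupos))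
      refine ⟨M, fun x hx => ?_⟩
      by_contra hc
      push_neg at hc
      exact absurd hx (not_le.mpr (hM x hc.le))
    have hne : {x : ℝ | u ≤ cdf ρ x}.Nonempty := by
      obtain ⟨x, hx⟩ := ((tendsto_cdf_atTop ρ).eventually (eventually_gt_nhds hu1)).exists
      exact ⟨x, hx.le⟩
    set q := sInf {x : ℝ | u ≤ cdf ρ x} with hqdef
    have hfq : u ≤ cdf ρ q := by
      have h2 : u ≤ ⨅ r : Ioi q, cdf ρ r := by
        refine le_ciInf (fun r => ?_)
        obtain ⟨x, hxS, hxr⟩ := (csInf_lt_iff hbdd hne).mp r.2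
        exact le_trans hxS ((cdf ρ).mono hxr.le)
      rwa [(cdf ρ).iInf_Ioi_eq q] at h2
    have hlt : ∀ x, x < q → cdf ρ x < u := by
      intro x hx
      by_contra hc
      push_neg at hc
      exact absurd (csInf_le hbdd hc) (not_le.mpr hx)
    have hgq : gl ρ q ≤ u := by
      refine le_of_tendsto ((cdf ρ).mono.tendsto_leftLim q) ?_
      filter_upwards [self_mem_nhdsWithin] with x hx
      exact (hlt x hx).le
    -- split the integral
    have hunion : (univ : Set ℝ) = Iio q ∪ ({q} ∪ Ioi q) := by
      ext x
      simp only [mem_univ, mem_union, mem_Iio, mem_singleton_iff, mem_Ioi, true_iff]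
      rcases lt_trichotomy x q with h | h | h
      · exact Or.inl h
      · exact Or.inr (Or.inl h)
      · exact Or.inr (Or.inr h)
    have hdisj1 : Disjoint (Iio q) ({q} ∪ Ioi q) := by
      rw [Set.disjoint_left]
      intro x hx hx2
      simp only [mem_Iio] at hx
      simp only [mem_union, mem_singleton_iff, mem_Ioi] at hx2
      rcases hx2 with rfl | h
      · exact lt_irrefl _ hx
      · linarith
    have hdisj2 : Disjoint ({q} : Set ℝ) (Ioi q) := by
      rw [Set.disjoint_left]
      intro x hx1 hx2
      simp only [mem_singleton_iff] at hx1
      simp only [mem_Ioi] at hx2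
      rw [hx1] at hx2
      exact lt_irrefl _ hx2
    rw [← setLIntegral_univ, hunion,
      lintegral_union ((measurableSet_singleton q).union measurableSet_Ioi) hdisj1,
      lintegral_union measurableSet_Ioi hdisj2]
    have P1 : ∫⁻ x in Iio q, vol01 (Prod.mk x ⁻¹' (tr ρ ⁻¹' Iic u)) ∂ρ
        = ENNReal.ofReal (gl ρ q) := by
      rw [setLIntegral_congr_fun measurableSet_Iio
        (fun x hx => ?_) (g := fun _ => 1),
        setLIntegral_const, one_mul, measure_Iio']
      rw [hfiber]
      refine vol01_one (fun v hv => ?_)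
      obtain ⟨hv0, hv1⟩ := hv
      have h1 := gl_le ρ x
      have h2 := hlt x hx
      have h3 : v * (cdf ρ x - gl ρ x) ≤ cdf ρ x - gl ρ x := by nlinarith
      show gl ρ x + v * (cdf ρ x - gl ρ x) ≤ u
      linarith
    have P2 : ∫⁻ x in {q}, vol01 (Prod.mk x ⁻¹' (tr ρ ⁻¹' Iic u)) ∂ρ
        = ENNReal.ofReal (u - gl ρ q) := by
      rw [lintegral_singleton, hfiber, measure_singleton']
      have hΔ : 0 ≤ cdf ρ q - gl ρ q := sub_nonneg.mpr (gl_le ρ q)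
      rcases hΔ.eq_or_lt with hΔ0 | hΔpos
      · have hueq : u = gl ρ q := le_antisymm (by linarith) hgq
        rw [← hΔ0]
        simp [← hueq]
      · set c := (u - gl ρ q) / (cdf ρ q - gl ρ q) with hc
        have hc0 : 0 ≤ c := div_nonneg (by linarith) hΔ
        have hc1 : c ≤ 1 := (div_le_one hΔpos).mpr (by linarith)
        have hset : {v : ℝ | gl ρ q + v * (cdf ρ q - gl ρ q) ≤ u} = Iic c := by
          ext v
          simp only [mem_setOf_eq, mem_Iic, hc]
          rw [le_div_iff₀ hΔpos]
          constructor <;> intro h <;> linarith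
        rw [hset, vol01_apply]
        have hset2 : Iic c ∩ Icc 0 1 = Icc 0 c := by
          ext z
          simp only [mem_inter_iff, mem_Iic, mem_Icc]
          exact ⟨fun h => ⟨h.2.1, h.1⟩, fun h => ⟨h.2, h.1, h.2.trans hc1⟩⟩
        rw [hset2, Real.volume_Icc, sub_zero, ← ENNReal.ofReal_mul hc0]
        congr 1
        rw [hc]
        field_simp
    have P3 : ∫⁻ x in Ioi q, vol01 (Prod.mk x ⁻¹' (tr ρ ⁻¹' Iic u)) ∂ρ = 0 := by
      set S := {x : ℝ | q < x ∧ cdf ρ x ≤ u} with hSdef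
      have hSmeas : MeasurableSet S := by
        have : S = Ioi q ∩ (cdf ρ) ⁻¹' (Iic u) := rfl
        rw [this]
        exact measurableSet_Ioi.inter ((cdf ρ).mono.measurable measurableSet_Iic)
      have hSnull : ρ S = 0 := by
        refine key_null ρ S (fun x hx => ?_)
        refine measure_mono_null (fun z hz => ?_) (show ρ (Ioc q x) = 0 from ?_)
        · exact ⟨hz.1.1, hz.2⟩
        · rw [measure_Ioc']
          exact ENNReal.ofReal_eq_zero.mpr (by linarith [hx.2, hfq])
      refine le_antisymm ?_ zero_le
      calc ∫⁻ x in Ioi q, vol01 (Prod.mk x ⁻¹' (tr ρ ⁻¹' Iic u)) ∂ρ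
          ≤ ∫⁻ x in (Ioi q \ S) ∪ S, vol01 (Prod.mk x ⁻¹' (tr ρ ⁻¹' Iic u)) ∂ρ := by
            refine lintegral_mono_set (fun x hx => ?_)
            by_cases h : x ∈ S
            · exact Or.inr h
            · exact Or.inl ⟨hx, h⟩
        _ ≤ (∫⁻ x in Ioi q \ S, vol01 (Prod.mk x ⁻¹' (tr ρ ⁻¹' Iic u)) ∂ρ)
            + ∫⁻ x in S, vol01 (Prod.mk x ⁻¹' (tr ρ ⁻¹' Iic u)) ∂ρ :=
            lintegral_union_le _ _ _
        _ = 0 := by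
            rw [setLIntegral_measure_zero _ _ hSnull, add_zero]
            rw [setLIntegral_congr_fun (measurableSet_Ioi.diff hSmeas)
              (fun x hx => ?_) (g := fun _ => 0), lintegral_zero]
            rw [hfiber]
            obtain ⟨hxq, hxS⟩ := hx
            have hfx : u < cdf ρ x := by
              by_contra hc
              push_neg at hc
              exact hxS ⟨hxq, hc⟩
            have hgx : u ≤ gl ρ x := le_trans hfq (cdf_le_gl ρ hxq)
            refine vol01_zero (fun v hv => ?_)
            obtain ⟨hle, hv0, hv1⟩ := hv
            simp only [mem_setOf_eq] at hle
            have h2 : 0 ≤ v * (cdf ρ x - gl ρ x) :=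
              mul_nonneg hv0 (by linarith [gl_le ρ x])
            have hgxu : gl ρ x = u := le_antisymm (by linarith) hgx
            have hprod : v * (cdf ρ x - gl ρ x) = 0 := le_antisymm (by linarith) h2
            have hv' : v = 0 := by
              rcases mul_eq_zero.mp hprod with h | h
              · exact h
              · exfalso; rw [hgxu] at h; linarith
            simp [hv']
    rw [P1, P2, P3, add_zero, ← ENNReal.ofReal_add (gl_nonneg ρ q) (by linarith)]
    have hR : vol01 (Iic u) = ENNReal.ofReal u := by
      rw [vol01_apply]
      have : Iic u ∩ Icc 0 1 = Icc 0 u := by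
        ext z
        simp only [mem_inter_iff, mem_Iic, mem_Icc]
        exact ⟨fun h => ⟨h.2.1, h.1⟩, fun h => ⟨h.2, h.1, h.2.trans hu1.le⟩⟩
      rw [this, Real.volume_Icc]
      norm_num
    rw [hR]
    congr 1
    ring

lemma tr_nonneg (ρ : Measure ℝ) {x v : ℝ} (hv : 0 ≤ v) : 0 ≤ tr ρ (x, v) :=
  add_nonneg (gl_nonneg ρ x) (mul_nonneg hv (sub_nonneg.mpr (gl_le ρ x)))

lemma tr_le_cdf (ρ : Measure ℝ) {x v : ℝ} (hv : v ≤ 1) : tr ρ (x, v) ≤ cdf ρ x := by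
  have h1 := gl_le ρ x
  show gl ρ x + v * (cdf ρ x - gl ρ x) ≤ cdf ρ x
  nlinarith

lemma tr_le_one (ρ : Measure ℝ) (x : ℝ) {v : ℝ} (hv : v ≤ 1) : tr ρ (x, v) ≤ 1 :=
  (tr_le_cdf ρ hv).trans (cdf_le_one ρ x)


/-- Existence part of Sklar's theorem: for every Borel probability measure `μ` on `ℝ^d`
with marginal cdfs `F i`, there is a copula `ν` (a probability measure supported on
`[0,1]^d` with uniform marginals) such that
`μ (∏ i, (-∞, y i]) = ν (∏ i, [0, F i (y i)])` for all `y`. -/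
theorem sklar_existence (d : ℕ) (hd : 1 ≤ d)
    (μ : Measure (Fin d → ℝ)) [IsProbabilityMeasure μ]
    (F : Fin d → ℝ → ℝ)
    (hF : ∀ i y, F i y = (μ {x | x i ≤ y}).toReal) :
    ∃ ν : Measure (Fin d → ℝ),
      IsProbabilityMeasure ν ∧
      ν (Set.univ.pi fun _ => Set.Icc (0:ℝ) 1) = 1 ∧
      (∀ i, ν.map (fun x => x i) = volume.restrict (Set.Icc (0:ℝ) 1)) ∧
      (∀ y : Fin d → ℝ,
        μ (Set.univ.pi fun i => Set.Iic (y i)) =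
          ν (Set.univ.pi fun i => Set.Icc 0 (F i (y i)))) := by
  classical
  set μi : Fin d → Measure ℝ := fun i => μ.map (fun x => x i) with hμi
  haveI : ∀ i, IsProbabilityMeasure (μi i) := fun i =>
    Measure.isProbabilityMeasure_map (measurable_pi_apply i).aemeasurable
  have hμiIic : ∀ (i : Fin d) (y : ℝ), μi i (Iic y) = μ {x | x i ≤ y} := by
    intro i y
    rw [hμi, Measure.map_apply (measurable_pi_apply i) measurableSet_Iic]
    rfl
  have hF' : ∀ i y, F i y = cdf (μi i) y := by
    intro i y
    rw [hF, cdf_eq_real, measureReal_def, hμiIic]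
  set P : Measure ((Fin d → ℝ) × ℝ) := μ.prod vol01 with hP
  haveI : IsProbabilityMeasure P := by
    constructor
    rw [hP, ← Set.univ_prod_univ, Measure.prod_prod, measure_univ, measure_univ, one_mul]
  set T : (Fin d → ℝ) × ℝ → (Fin d → ℝ) := fun p i => tr (μi i) (p.1 i, p.2) with hT
  have hTmeas : Measurable T := by
    refine measurable_pi_lambda _ (fun i => ?_)
    exact (measurable_tr (μi i)).comp
      (((measurable_pi_apply i).comp measurable_fst).prodMk measurable_snd)
  refine ⟨P.map T, Measure.isProbabilityMeasure_map hTmeas.aemeasurable, ?_, ?_, ?_⟩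
  · -- supported on [0,1]^d
    rw [Measure.map_apply hTmeas (MeasurableSet.univ_pi fun _ => measurableSet_Icc)]
    refine le_antisymm prob_le_one ?_
    calc (1:ℝ≥0∞) = P (univ ×ˢ Icc 0 1) := by
          rw [hP, Measure.prod_prod, measure_univ, one_mul]
          exact (vol01_one subset_rfl).symm
      _ ≤ P (T ⁻¹' univ.pi fun _ => Icc 0 1) := by
          refine measure_mono ?_
          rintro ⟨x, v⟩ ⟨-, hv⟩
          intro i _
          exact ⟨tr_nonneg (μi i) hv.1, tr_le_one (μi i) (x i) hv.2⟩
  · -- uniform marginals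
    intro i
    rw [Measure.map_map (measurable_pi_apply i) hTmeas]
    have hcomp : (fun x : Fin d → ℝ => x i) ∘ T
        = tr (μi i) ∘ (Prod.map (fun x : Fin d → ℝ => x i) (id : ℝ → ℝ)) := rfl
    rw [hcomp, ← Measure.map_map (measurable_tr (μi i))
      ((measurable_pi_apply i).prodMap measurable_id), hP,
      ← Measure.map_prod_map _ _ (measurable_pi_apply i) measurable_id,
      Measure.map_id]
    exact map_tr (μi i)
  · -- the copula identity
    intro y
    simp only [hF']
    rw [Measure.map_apply hTmeas
      (MeasurableSet.univ_pi fun i => measurableSet_Icc)]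
    set A : Set (Fin d → ℝ) := univ.pi (fun i => Iic (y i)) with hA
    refine le_antisymm ?_ ?_
    · -- μ A ≤ P (T⁻¹ S)
      calc μ A = P (A ×ˢ Icc 0 1) := by
            rw [hP, Measure.prod_prod, vol01_one subset_rfl, mul_one]
        _ ≤ P (T ⁻¹' univ.pi fun i => Icc 0 (cdf (μi i) (y i))) := by
            refine measure_mono ?_
            rintro ⟨x, v⟩ ⟨hxA, hv⟩
            intro i _
            refine ⟨tr_nonneg (μi i) hv.1, ?_⟩
            exact (tr_le_cdf (μi i) hv.2).trans ((cdf (μi i)).mono (hxA i (mem_univ i)))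
    · -- P (T⁻¹ S) ≤ μ A
      set B : Fin d → Set ℝ := fun i =>
        {t : ℝ | y i < t ∧ cdf (μi i) t ≤ cdf (μi i) (y i)} with hB
      have hBnull : ∀ i, μi i (B i) = 0 := by
        intro i
        refine key_null (μi i) (B i) (fun t ht => ?_)
        refine measure_mono_null (fun z hz => show z ∈ Ioc (y i) t from ⟨hz.1.1, hz.2⟩) ?_
        rw [measure_Ioc']
        exact ENNReal.ofReal_eq_zero.mpr (by linarith [ht.2])
      have hBmeas : ∀ i, MeasurableSet (B i) := by
        intro i
        have : B i = Ioi (y i) ∩ (cdf (μi i)) ⁻¹' (Iic (cdf (μi i) (y i))) := rfl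
        rw [this]
        exact measurableSet_Ioi.inter ((cdf (μi i)).mono.measurable measurableSet_Iic)
      have hsub : (T ⁻¹' univ.pi fun i => Icc 0 (cdf (μi i) (y i)))
          ⊆ (A ×ˢ (univ : Set ℝ)) ∪ (((univ : Set (Fin d → ℝ)) ×ˢ Iic (0:ℝ))
            ∪ ⋃ i, (((fun x : Fin d → ℝ => x i) ⁻¹' B i) ×ˢ (univ : Set ℝ))) := by
        rintro ⟨x, v⟩ hp
        by_cases hv : v ≤ 0
        · exact Or.inr (Or.inl ⟨mem_univ _, hv⟩)
        push_neg at hv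
        by_cases hxA : x ∈ A
        · exact Or.inl ⟨hxA, mem_univ _⟩
        refine Or.inr (Or.inr ?_)
        rw [hA] at hxA
        simp only [Set.mem_pi, mem_univ, mem_Iic, forall_true_left] at hxA
        push_neg at hxA
        obtain ⟨i, hyi⟩ := hxA
        refine mem_iUnion.mpr ⟨i, ?_, mem_univ _⟩
        have hpi := hp i (mem_univ i)
        obtain ⟨-, hle⟩ := hpi
        have hle' : gl (μi i) (x i) + v * (cdf (μi i) (x i) - gl (μi i) (x i))
            ≤ cdf (μi i) (y i) := hle
        have h1 : cdf (μi i) (y i) ≤ gl (μi i) (x i) := cdf_le_gl (μi i) hyi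
        have h2 : gl (μi i) (x i) ≤ cdf (μi i) (x i) := gl_le (μi i) (x i)
        have hΔ : cdf (μi i) (x i) - gl (μi i) (x i) ≤ 0 := by
          by_contra hc
          push_neg at hc
          have : 0 < v * (cdf (μi i) (x i) - gl (μi i) (x i)) := mul_pos hv hc
          linarith
        have hΔ0 : cdf (μi i) (x i) - gl (μi i) (x i) = 0 := le_antisymm hΔ (by linarith)
        have hv0 : v * (cdf (μi i) (x i) - gl (μi i) (x i)) = 0 := by rw [hΔ0, mul_zero]
        exact ⟨hyi, by linarith⟩
      calc P (T ⁻¹' univ.pi fun i => Icc 0 (cdf (μi i) (y i)))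
          ≤ P (A ×ˢ (univ : Set ℝ)) + (P ((univ : Set (Fin d → ℝ)) ×ˢ Iic (0:ℝ))
            + P (⋃ i, (((fun x : Fin d → ℝ => x i) ⁻¹' B i) ×ˢ (univ : Set ℝ)))) :=
            le_trans (measure_mono hsub)
              (le_trans (measure_union_le _ _) (by gcongr; exact measure_union_le _ _))
        _ = μ A := by
            have e1 : P (A ×ˢ (univ : Set ℝ)) = μ A := by
              rw [hP, Measure.prod_prod, measure_univ, mul_one]
            have e2 : P ((univ : Set (Fin d → ℝ)) ×ˢ Iic (0:ℝ)) = 0 := by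
              rw [hP, Measure.prod_prod, measure_univ, one_mul]
              refine vol01_zero (fun z hz => ?_)
              obtain ⟨h1, h2, -⟩ := hz
              simp only [mem_Iic] at h1
              simp [le_antisymm h1 h2]
            have e3 : P (⋃ i, (((fun x : Fin d → ℝ => x i) ⁻¹' B i) ×ˢ (univ : Set ℝ))) = 0 := by
              refine measure_iUnion_null (fun i => ?_)
              rw [hP, Measure.prod_prod, measure_univ, mul_one,
                ← Measure.map_apply (measurable_pi_apply i) (hBmeas i)]
              exact hBnull i
            rw [e1, e2, e3, add_zero, add_zero]
end

section
/- Let d ≥ 1 and let μ be a Borel probability measure on ℝ^d whose marginal cdfs F_1, …, F_d are all continuous functions on ℝ. If ν and ν′ are two Borel probability measures on ℝ^d, each supported on [0,1]^d with all one-dimensional marginals uniform on [0,1], and both satisfy μ(∏_{i=1}^d (-∞, y_i]) = ν(∏_{i=1}^d [0, F_i(y_i)]) and μ(∏_{i=1}^d (-∞, y_i]) = ν′(∏_{i=1}^d [0, F_i(y_i)]) for every y ∈ ℝ^d, then ν = ν′. (Uniqueness part of Sklar's theorem: if all the marginals of F are absolutely continuous—in particular continuous—the copula C is unique.) -/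
open MeasureTheory Set

section Aux

variable {d : ℕ}

/-- any single-coordinate value set is null for a measure with uniform marginals -/
lemma copula_coord_null (ν : Measure (Fin d → ℝ))
    (hνmarg : ∀ i, ν.map (fun x => x i) = volume.restrict (Set.Icc (0:ℝ) 1))
    (i : Fin d) (a : ℝ) : ν {x | x i = a} = 0 := by
  have h : ν {x | x i = a} = ν.map (fun x => x i) {a} := by
    rw [Measure.map_apply (measurable_pi_apply i) (measurableSet_singleton a)]
    rfl
  rw [h, hνmarg i, Measure.restrict_apply (measurableSet_singleton a)]
  exact measure_mono_null (inter_subset_left) (measure_singleton a)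

lemma copula_Iic_eq (ν : Measure (Fin d → ℝ)) [IsProbabilityMeasure ν]
    (hνsupp : ν (Set.univ.pi fun _ => Set.Icc (0:ℝ) 1) = 1)
    (hνmarg : ∀ i, ν.map (fun x => x i) = volume.restrict (Set.Icc (0:ℝ) 1))
    (u : Fin d → ℝ) :
    ν (Set.univ.pi fun i => Set.Iic (u i)) =
      ν (Set.univ.pi fun i => Set.Icc 0 (u i) ∩ Set.Ico 0 1) := by
  set A := Set.univ.pi fun i => Set.Icc 0 (u i) ∩ Set.Ico 0 1 with hA
  set B := Set.univ.pi fun i => Set.Iic (u i) with hB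
  set N := (Set.univ.pi fun _ : Fin d => Set.Icc (0:ℝ) 1)ᶜ ∪ ⋃ i, {x : Fin d → ℝ | x i = 1}
    with hN
  have hNnull : ν N = 0 := by
    have h1 : ν (Set.univ.pi fun _ : Fin d => Set.Icc (0:ℝ) 1)ᶜ = 0 := by
      rw [measure_compl (MeasurableSet.univ_pi fun i => measurableSet_Icc)
        (measure_ne_top ν _), hνsupp, measure_univ, tsub_self]
    have h2 : ν (⋃ i, {x : Fin d → ℝ | x i = 1}) = 0 :=
      measure_iUnion_null fun i => copula_coord_null ν hνmarg i 1
    exact le_antisymm (le_trans (measure_union_le _ _) (by rw [h1, h2, add_zero])) (zero_le)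
  have hsub : B ⊆ A ∪ N := by
    intro x hx
    by_cases hxs : ∀ i, x i ∈ Set.Icc (0:ℝ) 1
    · by_cases hx1 : ∃ i, x i = 1
      · exact Or.inr (Or.inr (mem_iUnion.2 hx1))
      · push_neg at hx1
        refine Or.inl fun i _ => ?_
        have h := hxs i
        exact ⟨⟨h.1, hx i (mem_univ i)⟩, h.1, lt_of_le_of_ne h.2 (hx1 i)⟩
    · push_neg at hxs
      obtain ⟨i, hi⟩ := hxs
      exact Or.inr (Or.inl fun h => hi (h i (mem_univ i)))
  have hAB : A ⊆ B := fun x hx i hi => (hx i hi).1.2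
  refine le_antisymm ?_ (measure_mono hAB)
  calc ν B ≤ ν (A ∪ N) := measure_mono hsub
    _ ≤ ν A + ν N := measure_union_le _ _
    _ = ν A := by rw [hNnull, add_zero]

end Aux

/-- Uniqueness part of Sklar's theorem: if all marginal cdfs of `μ` are continuous,
then any two copulas `ν`, `ν'` (probability measures supported on `[0,1]^d` with
uniform marginals) representing `μ` coincide. -/
theorem sklar_uniqueness (d : ℕ) (hd : 1 ≤ d)
    (μ : Measure (Fin d → ℝ)) [IsProbabilityMeasure μ]
    (F : Fin d → ℝ → ℝ)
    (hF : ∀ i y, F i y = (μ {x | x i ≤ y}).toReal)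
    (hFcont : ∀ i, Continuous (F i))
    (ν ν' : Measure (Fin d → ℝ))
    (hν : IsProbabilityMeasure ν) (hν' : IsProbabilityMeasure ν')
    (hνsupp : ν (Set.univ.pi fun _ => Set.Icc (0:ℝ) 1) = 1)
    (hν'supp : ν' (Set.univ.pi fun _ => Set.Icc (0:ℝ) 1) = 1)
    (hνmarg : ∀ i, ν.map (fun x => x i) = volume.restrict (Set.Icc (0:ℝ) 1))
    (hν'marg : ∀ i, ν'.map (fun x => x i) = volume.restrict (Set.Icc (0:ℝ) 1))
    (hνrep : ∀ y : Fin d → ℝ,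
      μ (Set.univ.pi fun i => Set.Iic (y i)) =
        ν (Set.univ.pi fun i => Set.Icc 0 (F i (y i))))
    (hν'rep : ∀ y : Fin d → ℝ,
      μ (Set.univ.pi fun i => Set.Iic (y i)) =
        ν' (Set.univ.pi fun i => Set.Icc 0 (F i (y i)))) :
    ν = ν' := by
  have hdne : Nonempty (Fin d) := ⟨⟨0, hd⟩⟩
  -- IVT: every t ∈ (0,1) is attained by F i
  have hIVT : ∀ i, ∀ t : ℝ, 0 < t → t < 1 → ∃ y, F i y = t := by
    intro i t ht0 ht1
    haveI : IsProbabilityMeasure (μ.map (fun x => x i)) :=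
      Measure.isProbabilityMeasure_map (measurable_pi_apply i).aemeasurable
    have hFi : F i = ProbabilityTheory.cdf (μ.map (fun x => x i)) := by
      funext y
      rw [ProbabilityTheory.cdf_eq_real, measureReal_def, hF,
        Measure.map_apply (measurable_pi_apply i) measurableSet_Iic]
      rfl
    have hbot : Filter.Tendsto (F i) Filter.atBot (nhds 0) := by
      rw [hFi]; exact ProbabilityTheory.tendsto_cdf_atBot _
    have htop : Filter.Tendsto (F i) Filter.atTop (nhds 1) := by
      rw [hFi]; exact ProbabilityTheory.tendsto_cdf_atTop _
    obtain ⟨y₁, hy₁⟩ := (hbot.eventually (eventually_lt_nhds ht0)).exists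
    obtain ⟨y₂, hy₂⟩ := (htop.eventually (eventually_gt_nhds ht1)).exists
    have : t ∈ Set.uIcc (F i y₁) (F i y₂) :=
      ⟨le_trans (min_le_left _ _) hy₁.le, le_trans hy₂.le (le_max_right _ _)⟩
    obtain ⟨y, _, hy⟩ := intermediate_value_uIcc (Continuous.continuousOn (hFcont i)) this
    exact ⟨y, hy⟩
  -- core cube equality
  have hcube : ∀ u : Fin d → ℝ, (∀ i, 0 < u i) → (∀ i, u i < 1) →
      ν (Set.univ.pi fun i => Set.Icc 0 (u i)) =
        ν' (Set.univ.pi fun i => Set.Icc 0 (u i)) := by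
    intro u h0 h1
    choose y hy using fun i => hIVT i (u i) (h0 i) (h1 i)
    have h := (hνrep y).symm.trans (hν'rep y)
    simpa only [hy] using h
  -- equality on all closed lower boxes (with degenerate case)
  have hbox : ∀ u : Fin d → ℝ, (∀ i, u i < 1) →
      ν (Set.univ.pi fun i => Set.Icc 0 (u i)) =
        ν' (Set.univ.pi fun i => Set.Icc 0 (u i)) := by
    intro u h1
    by_cases h0 : ∀ i, 0 < u i
    · exact hcube u h0 h1
    · push_neg at h0
      obtain ⟨i, hi⟩ := h0
      have hsub : (Set.univ.pi fun i => Set.Icc 0 (u i)) ⊆ {x : Fin d → ℝ | x i = 0} := by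
        intro x hx
        have := hx i (mem_univ i)
        exact le_antisymm (this.2.trans hi) this.1
      have hz : ν (Set.univ.pi fun i => Set.Icc 0 (u i)) = 0 :=
        measure_mono_null hsub (copula_coord_null ν hνmarg i 0)
      have hz' : ν' (Set.univ.pi fun i => Set.Icc 0 (u i)) = 0 :=
        measure_mono_null hsub (copula_coord_null ν' hν'marg i 0)
      rw [hz, hz']
  -- equality on all Iic boxes
  have hIic : ∀ u : Fin d → ℝ,
      ν (Set.univ.pi fun i => Set.Iic (u i)) = ν' (Set.univ.pi fun i => Set.Iic (u i)) := by
    intro u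
    rw [copula_Iic_eq ν hνsupp hνmarg, copula_Iic_eq ν' hν'supp hν'marg]
    -- exhaust by increasing boxes
    set t : ℕ → Fin d → ℝ := fun n i => min (u i) (1 - ((n:ℝ) + 2)⁻¹) with ht
    have htmono : ∀ i, Monotone fun n => Set.Icc (0:ℝ) (t n i) := by
      intro i n m hnm
      apply Icc_subset_Icc le_rfl
      apply min_le_min le_rfl
      have : ((n:ℝ) + 2)⁻¹ ≥ ((m:ℝ) + 2)⁻¹ := by
        apply inv_anti₀ (by positivity)
        have : (n:ℝ) ≤ m := Nat.cast_le.2 hnm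
        linarith
      linarith
    have hUnion : (⋃ n, Set.univ.pi fun i => Set.Icc 0 (t n i)) =
        Set.univ.pi fun i => Set.Icc 0 (u i) ∩ Set.Ico 0 1 := by
      rw [iUnion_univ_pi_of_monotone htmono]
      refine pi_congr rfl fun i _ => ?_
      ext x
      simp only [mem_iUnion, mem_Icc, mem_inter_iff, mem_Ico, le_min_iff, ht]
      constructor
      · rintro ⟨n, hx0, hxu, hxn⟩
        refine ⟨⟨hx0, hxu⟩, hx0, lt_of_le_of_lt hxn ?_⟩
        have : (0:ℝ) < ((n:ℝ) + 2)⁻¹ := by positivity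
        linarith
      · rintro ⟨⟨hx0, hxu⟩, -, hx1⟩
        obtain ⟨n, hn⟩ := exists_nat_ge (1 - x)⁻¹
        refine ⟨n, hx0, hxu, ?_⟩
        have h1x : (0:ℝ) < 1 - x := by linarith
        have hn2 : (1 - x)⁻¹ ≤ (n:ℝ) + 2 := by linarith
        have := inv_anti₀ (by positivity) hn2
        rw [inv_inv] at this
        linarith
    have hdir : ∀ (ρ : Measure (Fin d → ℝ)),
        ρ (Set.univ.pi fun i => Set.Icc 0 (u i) ∩ Set.Ico 0 1) =
          ⨆ n, ρ (Set.univ.pi fun i => Set.Icc 0 (t n i)) := by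
      intro ρ
      rw [← hUnion]
      exact Directed.measure_iUnion
        (directed_of_isDirected_le fun n m hnm => pi_mono fun i _ => htmono i hnm)
    rw [hdir ν, hdir ν']
    congr 1
    funext n
    apply hbox
    intro i
    have h2 : (0:ℝ) < ((n:ℝ) + 2)⁻¹ := by positivity
    calc t n i ≤ 1 - ((n:ℝ) + 2)⁻¹ := min_le_right _ _
      _ < 1 := by linarith
  -- conclude via π-system argument
  have hgen : (inferInstance : MeasurableSpace (Fin d → ℝ)) =
      MeasurableSpace.generateFrom
        (Set.pi Set.univ '' Set.pi Set.univ fun _ : Fin d => Set.range Set.Iic) := by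
    refine (generateFrom_eq_pi (fun _ => ?_) fun _ => ?_).symm
    · rw [← borel_eq_generateFrom_Iic ℝ]
      exact (BorelSpace.measurable_eq).symm
    · refine ⟨fun n => Set.Iic (n:ℝ), fun n => mem_range_self _, ?_⟩
      ext x
      simp only [mem_iUnion, mem_Iic, mem_univ, iff_true]
      exact exists_nat_ge x
  refine ext_of_generate_finite _ hgen (IsPiSystem.pi fun _ => isPiSystem_Iic) ?_ ?_
  · rintro _ ⟨s, hs, rfl⟩
    choose v hv using fun i => hs i (mem_univ i)
    have hseq : s = fun i => Set.Iic (v i) := funext fun i => (hv i).symm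
    rw [hseq]
    exact hIic v
  · simp [measure_univ]
end
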